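/- Let (W,S) be a Coxeter system, Q a word in the generators S, and π ∈ W such that some subsequence of Q is a reduced word for π. Then the subword complex Δ(Q,π) is vertex-decomposable. -/

import Mathlib

/-!
STATEMENT 7: Let (W,S) be a Coxeter system, Q a word in the generators S, and π ∈ W such
that some subsequence of Q is a reduced word for π. Then the subword complex Δ(Q,π) is
vertex-decomposable.
-/

open scoped Classical

/-- `F` is a facet (inclusion-maximal face) of the abstract simplicial complex `Δ`. -/
def IsFacet {V : Type*} (Δ : Set (Finset V)) (F : Finset V) : Prop :=
  F ∈ Δ ∧ ∀ G ∈ Δ, F ⊆ G → F = G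

/-- The complex `Δ` is pure: all facets have the same cardinality. -/
def IsPure {V : Type*} (Δ : Set (Finset V)) : Prop :=
  ∀ F G : Finset V, IsFacet Δ F → IsFacet Δ G → F.card = G.card

/-- The deletion of a vertex `v` from `Δ`. -/
def complexDel {V : Type*} (Δ : Set (Finset V)) (v : V) : Set (Finset V) :=
  {G ∈ Δ | v ∉ G}

/-- The link of a vertex `v` in `Δ`. -/
def complexLink {V : Type*} (Δ : Set (Finset V)) (v : V) : Set (Finset V) :=
  {G | v ∉ G ∧ G ∈ Δ ∧ insert v G ∈ Δ}

/-- `Δ` is vertex-decomposable: `Δ` is pure, and either `Δ = {∅}` or there is a vertex `v`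
such that both the deletion and the link of `v` are vertex-decomposable. -/
inductive VertexDecomposable {V : Type*} : Set (Finset V) → Prop
  | of_empty_face : VertexDecomposable {(∅ : Finset V)}
  | step (Δ : Set (Finset V)) (v : V) : IsPure Δ →
      VertexDecomposable (complexDel Δ v) → VertexDecomposable (complexLink Δ v) →
      VertexDecomposable Δ

variable {B W : Type*} [Group W] {M : CoxeterMatrix B}

/-- The word (list of letters of `Q`, in order) at the positions of `Q` not in `P`. -/
def complementWord (Q : List B) (P : Finset (Fin Q.length)) : List B :=
  ((List.finRange Q.length).filter (fun i => i ∉ P)).map Q.get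

/-- `P` is a face of the subword complex `Δ(Q, π)`: identifying subwords of `Q` with subsets
of positions, `P` is a face iff the complementary subword `Q ∖ P` contains a reduced word
for `π` as a subsequence. -/
def SubwordComplex (cs : CoxeterSystem M W) (Q : List B) (π : W) :
    Set (Finset (Fin Q.length)) :=
  {P | ∃ w : List B, cs.IsReduced w ∧ cs.wordProd w = π ∧ w.Sublist (complementWord Q P)}


-- ===================== auxiliary machinery =====================

open scoped Classical
open List

namespace CoxAux

variable {B W : Type*} [Group W] {M : CoxeterMatrix B}

local prefix:100 "ℓ" => CoxeterSystem.length

lemma conj_eq_simple_iff (cs : CoxeterSystem M W) (i : B) (t : W) :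
    cs.simple i * t * cs.simple i = cs.simple i ↔ t = cs.simple i := by
  have h2 : cs.simple i * cs.simple i = 1 := cs.simple_mul_simple_self i
  constructor
  · intro h
    have := congrArg (fun x => cs.simple i * x * cs.simple i) h
    simpa [mul_assoc, cs.simple_mul_simple_cancel_left, h2] using this
  · rintro rfl
    rw [h2, one_mul]

/-- The Björner–Brenti involution associated to a simple generator. -/
noncomputable def fPerm (cs : CoxeterSystem M W) (i : B) : Equiv.Perm (W × ZMod 2) :=
  Function.Involutive.toPerm
    (fun p => (cs.simple i * p.1 * cs.simple i,
      if p.1 = cs.simple i then p.2 + 1 else p.2))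
    (by
      rintro ⟨t, ε⟩
      have h2 : cs.simple i * cs.simple i = 1 := cs.simple_mul_simple_self i
      have hfix : cs.simple i * (cs.simple i * t * cs.simple i) * cs.simple i = t := by
        simp [mul_assoc, cs.simple_mul_simple_cancel_left, h2]
      dsimp only
      rw [Prod.mk.injEq]
      refine ⟨hfix, ?_⟩
      by_cases ht : t = cs.simple i
      · rw [if_pos ht, if_pos ((conj_eq_simple_iff cs i t).2 ht), add_assoc]
        norm_num
        exact (by decide : (1 + 1 : ZMod 2) = 0)
      · rw [if_neg ht, if_neg (fun h => ht ((conj_eq_simple_iff cs i t).1 h))])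

@[simp] lemma fPerm_apply (cs : CoxeterSystem M W) (i : B) (p : W × ZMod 2) :
    fPerm cs i p = (cs.simple i * p.1 * cs.simple i,
      if p.1 = cs.simple i then p.2 + 1 else p.2) := rfl

end CoxAux

namespace CoxAux
variable {B W : Type*} [Group W] {M : CoxeterMatrix B}

lemma prodF (cs : CoxeterSystem M W) (ω : List B) (t : W) (ε : ZMod 2) :
    (ω.map (fPerm cs)).prod (t, ε) =
      (cs.wordProd ω * t * (cs.wordProd ω)⁻¹,
        ε + ((cs.rightInvSeq ω).count t : ZMod 2)) := by
  induction ω generalizing ε with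
  | nil => simp [CoxeterSystem.rightInvSeq]
  | cons i ω ih =>
      rw [List.map_cons, List.prod_cons]
      have : (fPerm cs i * (ω.map (fPerm cs)).prod) (t, ε)
          = fPerm cs i ((ω.map (fPerm cs)).prod (t, ε)) := rfl
      rw [this, ih, fPerm_apply]
      have hris : cs.rightInvSeq (i :: ω)
          = ((cs.wordProd ω)⁻¹ * cs.simple i * cs.wordProd ω) :: cs.rightInvSeq ω := rfl
      have hcond : (cs.wordProd ω * t * (cs.wordProd ω)⁻¹ = cs.simple i)
          ↔ t = (cs.wordProd ω)⁻¹ * cs.simple i * cs.wordProd ω := by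
        constructor
        · intro h; rw [← h]; group
        · intro h; rw [h]; group
      rw [Prod.mk.injEq]
      constructor
      · rw [cs.wordProd_cons, mul_inv_rev, cs.inv_simple]; group
      · rw [hris, List.count_cons]
        simp only [beq_iff_eq]
        by_cases hc : t = (cs.wordProd ω)⁻¹ * cs.simple i * cs.wordProd ω
        · rw [if_pos (hcond.2 hc), if_pos hc.symm]
          push_cast
          ring
        · rw [if_neg (fun h => hc (hcond.1 h)), if_neg (fun h => hc h.symm)]
          push_cast
          ring

end CoxAux

namespace CoxAux
variable {B W : Type*} [Group W] {M : CoxeterMatrix B}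

open CoxeterSystem

lemma u_formula (cs : CoxeterSystem M W) :
    ∀ (q : ℕ) (i j : B),
      (cs.wordProd (alternatingWord i j q))⁻¹ *
        cs.simple (if Even q then j else i) * cs.wordProd (alternatingWord i j q)
      = (cs.simple j * cs.simple i) ^ q * cs.simple j := by
  intro q
  induction q with
  | zero => intro i j; simp [alternatingWord]
  | succ q ih =>
      intro i j
      rw [alternatingWord_succ, List.concat_eq_append, cs.wordProd_append]
      have hc : (if Even (q+1) then j else i) = (if Even q then i else j) := by
        rcases Nat.even_or_odd q with h | h
        · rw [if_neg (by simp [Nat.even_add_one, h]), if_pos h]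
        · rw [if_pos (by simpa [Nat.even_add_one] using h),
            if_neg (by simpa using h)]
      rw [hc]
      have := ih j i
      -- this : (π aw j i q)⁻¹ * s (if Even q then i else j) * π (aw j i q)
      --        = (s i * s j)^q * s i
      have hgoal : cs.simple j * ((cs.simple i * cs.simple j) ^ q * cs.simple i) * cs.simple j
          = (cs.simple j * cs.simple i) ^ (q+1) * cs.simple j := by
        have hsc : SemiconjBy (cs.simple j) (cs.simple i * cs.simple j)
            (cs.simple j * cs.simple i) := by
          unfold SemiconjBy; group
        have := (hsc.pow_right q).eq
        rw [pow_succ]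
        calc cs.simple j * ((cs.simple i * cs.simple j) ^ q * cs.simple i) * cs.simple j
            = (cs.simple j * (cs.simple i * cs.simple j) ^ q) * (cs.simple i * cs.simple j) := by
              group
          _ = ((cs.simple j * cs.simple i) ^ q * cs.simple j) * (cs.simple i * cs.simple j) := by
              rw [this]
          _ = (cs.simple j * cs.simple i) ^ q * (cs.simple j * cs.simple i) * cs.simple j := by
              group
      rw [← hgoal, ← this]
      simp only [cs.wordProd_singleton, mul_inv_rev, cs.inv_simple]
      group

lemma ris_alternatingWord (cs : CoxeterSystem M W) (i j : B) :
    ∀ n : ℕ, cs.rightInvSeq (alternatingWord i j n)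
      = (List.range n).reverse.map
          (fun q => (cs.simple j * cs.simple i) ^ q * cs.simple j) := by
  intro n
  induction n with
  | zero => simp [CoxeterSystem.rightInvSeq, alternatingWord]
  | succ n ih =>
      rw [alternatingWord_succ']
      have hris : cs.rightInvSeq ((if Even n then j else i) :: alternatingWord i j n)
          = ((cs.wordProd (alternatingWord i j n))⁻¹ *
              cs.simple (if Even n then j else i) * cs.wordProd (alternatingWord i j n))
            :: cs.rightInvSeq (alternatingWord i j n) := rfl
      rw [hris, u_formula cs n i j, ih, List.range_succ, List.reverse_append]
      simp

end CoxAux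

namespace CoxAux
variable {B W : Type*} [Group W] {M : CoxeterMatrix B}

open CoxeterSystem

lemma count_ris_alternatingWord_even (cs : CoxeterSystem M W) (i j : B) (m : ℕ)
    (hm : (cs.simple j * cs.simple i) ^ m = 1) (t : W) :
    Even ((cs.rightInvSeq (alternatingWord i j (2 * m))).count t) := by
  rw [ris_alternatingWord, List.map_reverse, List.count_reverse, two_mul,
    List.range_add, List.map_append, List.count_append, List.map_map]
  have hgg : ((fun q => (cs.simple j * cs.simple i) ^ q * cs.simple j) ∘ fun x => m + x)
      = (fun q => (cs.simple j * cs.simple i) ^ q * cs.simple j) := by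
    funext q
    simp [Function.comp, pow_add, hm]
  rw [hgg]
  exact ⟨_, rfl⟩

end CoxAux

namespace CoxAux
variable {B W : Type*} [Group W] {M : CoxeterMatrix B}

open CoxeterSystem

lemma pow_eq_prod_map_fPerm (cs : CoxeterSystem M W) (i j : B) (m : ℕ) :
    (fPerm cs i * fPerm cs j) ^ m = ((alternatingWord i j (2 * m)).map (fPerm cs)).prod := by
  induction m with
  | zero => simp [alternatingWord]
  | succ m ih =>
      have haw : alternatingWord i j (2 * (m + 1)) = i :: j :: alternatingWord i j (2 * m) := by
        have h1 : 2 * (m + 1) = (2 * m + 1) + 1 := by ring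
        rw [h1, alternatingWord_succ', alternatingWord_succ']
        rw [if_neg (by simp [Nat.even_add_one, parity_simps]), if_pos (by simp)]
      rw [haw, List.map_cons, List.map_cons, List.prod_cons, List.prod_cons, ← ih, pow_succ',
        mul_assoc]

lemma fPerm_liftable (cs : CoxeterSystem M W) : M.IsLiftable (fPerm cs) := by
  intro i j
  rw [pow_eq_prod_map_fPerm]
  apply Equiv.ext
  rintro ⟨t, ε⟩
  · have h1 : cs.wordProd (alternatingWord i j (2 * M i j)) = 1 := by
      rw [cs.prod_alternatingWord_eq_mul_pow, if_pos (by exact ⟨M i j, by ring⟩)]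
      rw [one_mul]
      have : 2 * M i j / 2 = M i j := by omega
      rw [this, cs.simple_mul_simple_pow]
    have h2 : Even ((cs.rightInvSeq (alternatingWord i j (2 * M i j))).count t) :=
      count_ris_alternatingWord_even cs i j (M i j) (cs.simple_mul_simple_pow' i j) t
    rw [prodF, h1, Equiv.Perm.one_apply]
    obtain ⟨c, hc⟩ := h2
    rw [hc, Prod.mk.injEq]
    constructor
    · group
    · push_cast
      have h2' : (2 : ZMod 2) = 0 := by decide
      rw [(by ring : (ε : ZMod 2) + ((c : ZMod 2) + (c : ZMod 2)) = ε + 2 * c), h2', zero_mul,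
        add_zero]

/-- The Björner–Brenti representation `W →* Perm (W × ZMod 2)`. -/
noncomputable def bbRep (cs : CoxeterSystem M W) : W →* Equiv.Perm (W × ZMod 2) :=
  cs.lift ⟨fPerm cs, fPerm_liftable cs⟩

lemma bbRep_wordProd (cs : CoxeterSystem M W) (ω : List B) :
    bbRep cs (cs.wordProd ω) = (ω.map (fPerm cs)).prod := by
  induction ω with
  | nil => simp [cs.wordProd_nil, bbRep]
  | cons i ω ih =>
      rw [cs.wordProd_cons, map_mul, ih, List.map_cons, List.prod_cons, bbRep,
        cs.lift_apply_simple]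

lemma count_ris_parity (cs : CoxeterSystem M W) {ω ω' : List B}
    (h : cs.wordProd ω = cs.wordProd ω') (t : W) :
    ((cs.rightInvSeq ω).count t : ZMod 2) = ((cs.rightInvSeq ω').count t : ZMod 2) := by
  have h1 := prodF cs ω t 0
  have h2 := prodF cs ω' t 0
  rw [← bbRep_wordProd] at h1 h2
  rw [h] at h1
  rw [h1] at h2
  have := congrArg Prod.snd h2
  simpa using this

end CoxAux

namespace CoxAux
variable {B W : Type*} [Group W] {M : CoxeterMatrix B}

open CoxeterSystem

lemma mem_ris_of_right_descent (cs : CoxeterSystem M W) {ω : List B} (hω : cs.IsReduced ω)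
    {i : B} (h : cs.length (cs.wordProd ω * cs.simple i) < cs.length (cs.wordProd ω)) :
    cs.simple i ∈ cs.rightInvSeq ω := by
  set w := cs.wordProd ω with hw
  obtain ⟨τ, hτred, hτ⟩ := cs.exists_reduced_word' (w * cs.simple i)
  have hπ : cs.wordProd (τ.concat i) = w := by
    rw [cs.wordProd_concat, ← hτ, mul_assoc, cs.simple_mul_simple_self, mul_one]
  have hlen : cs.length (w * cs.simple i) + 1 = cs.length w :=
    (cs.length_mul_simple w i).resolve_left (by omega)
  have hred : cs.IsReduced (τ.concat i) := by
    unfold CoxeterSystem.IsReduced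
    rw [hπ, List.length_concat, ← hτred, ← hτ, hlen]
  have hnodup : (cs.rightInvSeq (τ.concat i)).Nodup := hred.nodup_rightInvSeq
  have hmem : cs.simple i ∈ cs.rightInvSeq (τ.concat i) := by
    rw [cs.rightInvSeq_concat]
    simp
  have hcount1 : (cs.rightInvSeq (τ.concat i)).count (cs.simple i) = 1 :=
    List.count_eq_one_of_mem hnodup hmem
  have hpar := count_ris_parity cs (hπ.trans hw.symm ▸ rfl : cs.wordProd (τ.concat i) = cs.wordProd ω) (cs.simple i)
  rw [hcount1] at hpar
  by_contra hnot
  rw [List.count_eq_zero_of_not_mem hnot] at hpar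
  simp at hpar

/-- Right exchange property. -/
lemma right_exchange (cs : CoxeterSystem M W) {ω : List B} (hω : cs.IsReduced ω)
    {i : B} (h : cs.length (cs.wordProd ω * cs.simple i) < cs.length (cs.wordProd ω)) :
    ∃ j, j < ω.length ∧ cs.wordProd ω * cs.simple i = cs.wordProd (ω.eraseIdx j) := by
  obtain ⟨j, hj, hje⟩ := List.getElem_of_mem (mem_ris_of_right_descent cs hω h)
  rw [cs.length_rightInvSeq] at hj
  refine ⟨j, hj, ?_⟩
  have := cs.wordProd_mul_getD_rightInvSeq ω j
  rw [List.getD_eq_getElem _ _ (by rw [cs.length_rightInvSeq]; exact hj), hje] at this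
  exact this

/-- Left exchange property, in the form needed: a reduced word for `π` contains a
reduced word for `s i * π` as a sublist, provided `ℓ(s i π) < ℓ(π)`. -/
lemma left_exchange_sublist (cs : CoxeterSystem M W) {ω : List B} (hω : cs.IsReduced ω)
    {i : B} (h : cs.length (cs.simple i * cs.wordProd ω) < cs.length (cs.wordProd ω)) :
    ∃ u : List B, cs.IsReduced u ∧ cs.wordProd u = cs.simple i * cs.wordProd ω
      ∧ u.Sublist ω := by
  have hrev : cs.IsReduced ω.reverse := (cs.isReduced_reverse_iff ω).2 hω
  have hd : cs.length (cs.wordProd ω.reverse * cs.simple i)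
      < cs.length (cs.wordProd ω.reverse) := by
    rw [cs.wordProd_reverse]
    calc cs.length ((cs.wordProd ω)⁻¹ * cs.simple i)
        = cs.length (((cs.wordProd ω)⁻¹ * cs.simple i)⁻¹) := (cs.length_inv _).symm
      _ = cs.length (cs.simple i * cs.wordProd ω) := by
          rw [mul_inv_rev, inv_inv, cs.inv_simple]
      _ < cs.length (cs.wordProd ω) := h
      _ = cs.length ((cs.wordProd ω)⁻¹) := (cs.length_inv _).symm
  obtain ⟨j, hj, hje⟩ := right_exchange cs hrev hd
  refine ⟨(ω.reverse.eraseIdx j).reverse, ?_, ?_, ?_⟩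
  · -- reduced: length computation
    have h2 : cs.length (cs.simple i * cs.wordProd ω) + 1 = cs.length (cs.wordProd ω) :=
      (cs.length_simple_mul (cs.wordProd ω) i).resolve_left (by omega)
    unfold CoxeterSystem.IsReduced
    rw [cs.wordProd_reverse, ← hje, mul_inv_rev, cs.inv_simple, cs.wordProd_reverse, inv_inv,
      List.length_reverse, List.length_eraseIdx, if_pos hj, List.length_reverse]
    have h4 : cs.length (cs.wordProd ω) = ω.length := hω
    omega
  · rw [cs.wordProd_reverse, ← hje, mul_inv_rev, cs.inv_simple, cs.wordProd_reverse, inv_inv]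
  · have : (ω.reverse.eraseIdx j) <+ ω.reverse := List.eraseIdx_sublist _ _
    have := this.reverse
    rwa [List.reverse_reverse] at this

end CoxAux

open scoped Classical
open List

namespace CoxAux

/-- If `l₀` is a proper sublist (in length) of `l`, one can erase one index of `l`
keeping `l₀` a sublist. -/
lemma sublist_eraseIdx {α : Type*} {l₀ l : List α} (h : l₀ <+ l)
    (hlt : l₀.length < l.length) : ∃ k, k < l.length ∧ l₀ <+ l.eraseIdx k := by
  induction h with
  | slnil => simp at hlt
  | cons a h ih =>
      exact ⟨0, by simp, by simpa using h⟩
  | cons_cons a h ih =>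
      rename_i l₁ l₂
      have hlt' : l₁.length < l₂.length := by simpa using hlt
      obtain ⟨k, hk, hs⟩ := ih hlt'
      exact ⟨k + 1, by simpa using hk, by simpa using hs.cons₂ a⟩

lemma nodup_eraseIdx_eq_filter {α : Type*} [DecidableEq α] :
    ∀ (l : List α), l.Nodup → ∀ (k : ℕ) (hk : k < l.length),
      l.eraseIdx k = l.filter (fun x => x ≠ l.get ⟨k, hk⟩) := by
  intro l
  induction l with
  | nil => intro _ k hk; simp at hk
  | cons a l ih =>
      intro hnd k hk
      rcases k with _ | k
      · simp only [List.eraseIdx_zero, List.get, List.tail_cons]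
        rw [List.filter_cons, if_neg (by simp)]
        have : ∀ x ∈ l, (x ≠ a) := fun x hx => fun hxa => (by simp [hxa] at hnd; exact hnd.1 (hxa ▸ hx))
        rw [List.filter_eq_self.2 (fun x hx => by simpa using this x hx)]
      · have hk' : k < l.length := by simpa using hk
        simp only [List.eraseIdx_cons_succ]
        rw [ih hnd.of_cons k hk']
        rw [List.filter_cons, if_pos]
        · rfl
        · simp only [ne_eq, decide_eq_true_eq]
          intro hag
          have : a ∈ l := hag ▸ l.get_mem ⟨k, hk'⟩
          simp [this] at hnd

end CoxAux


namespace CoxAux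

variable {B W : Type*} [Group W] {M : CoxeterMatrix B}

lemma complementWord_sublist (Q : List B) (P : Finset (Fin Q.length)) :
    (complementWord Q P).Sublist Q := by
  have h1 : ((List.finRange Q.length).filter (fun i => i ∉ P)) <+ List.finRange Q.length :=
    List.filter_sublist
  have := h1.map Q.get
  rwa [List.map_get_finRange] at this

lemma complementWord_anti (Q : List B) {P P' : Finset (Fin Q.length)} (h : P ⊆ P') :
    (complementWord Q P').Sublist (complementWord Q P) := by
  apply List.Sublist.map
  apply List.monotone_filter_right
  intro a ha
  simp only [decide_eq_true_eq] at ha ⊢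
  exact fun hmem => ha (h hmem)

lemma toFinset_filter_not_mem (Q : List B) (P : Finset (Fin Q.length)) :
    ((List.finRange Q.length).filter (fun i => i ∉ P)).toFinset = Pᶜ := by
  ext x
  simp [List.mem_filter, List.mem_finRange]

lemma complementWord_length (Q : List B) (P : Finset (Fin Q.length)) :
    (complementWord Q P).length = Q.length - P.card := by
  rw [complementWord, List.length_map]
  have hnd : ((List.finRange Q.length).filter (fun i => i ∉ P)).Nodup :=
    (List.nodup_finRange _).filter _
  rw [← List.toFinset_card_of_nodup hnd, toFinset_filter_not_mem, Finset.card_compl,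
    Fintype.card_fin]

/-- Key extension lemma: if the witness is a proper sublist of the complement word, then
a new position can be added to the face. -/
lemma exists_insert_of_lt (Q : List B) (P : Finset (Fin Q.length)) {w : List B}
    (hw : w.Sublist (complementWord Q P)) (hlt : w.length < (complementWord Q P).length) :
    ∃ i : Fin Q.length, i ∉ P ∧ w.Sublist (complementWord Q (insert i P)) := by
  set l := (List.finRange Q.length).filter (fun i => i ∉ P) with hl
  obtain ⟨l₀, hl₀, rfl⟩ := List.sublist_map_iff.1 hw
  have hlen : l₀.length < l.length := by
    rw [complementWord, List.length_map] at hlt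
    rwa [List.length_map] at hlt
  obtain ⟨k, hk, hsub⟩ := sublist_eraseIdx hl₀ hlen
  set i := l.get ⟨k, hk⟩ with hi
  have himem : i ∈ l := l.get_mem ⟨k, hk⟩
  have hiP : i ∉ P := by
    have := List.of_mem_filter himem
    simpa using this
  refine ⟨i, hiP, ?_⟩
  have hcompl : complementWord Q (insert i P) = (l.eraseIdx k).map Q.get := by
    rw [complementWord]
    congr 1
    rw [nodup_eraseIdx_eq_filter l ((List.nodup_finRange _).filter _) k hk, ← hi, hl,
      List.filter_filter]
    apply List.filter_congr
    intro x hx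
    simp only [Finset.mem_insert, ne_eq]
    by_cases h1 : x = i <;> by_cases h2 : x ∈ P <;> simp [h1, h2]
  rw [hcompl]
  exact hsub.map Q.get

end CoxAux


namespace CoxAux

variable {B W : Type*} [Group W] {M : CoxeterMatrix B}

lemma facet_card_eq (cs : CoxeterSystem M W) (Q : List B) (π : W) {F : Finset (Fin Q.length)}
    (hF : IsFacet (SubwordComplex cs Q π) F) : F.card = Q.length - cs.length π := by
  obtain ⟨⟨w, hwred, hwprod, hwsub⟩, hmax⟩ := hF
  have hle : w.length ≤ (complementWord Q F).length := hwsub.length_le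
  have heq : w.length = (complementWord Q F).length := by
    by_contra hne
    have hlt : w.length < (complementWord Q F).length := lt_of_le_of_ne hle hne
    obtain ⟨i, hiF, hsub'⟩ := exists_insert_of_lt Q F hwsub hlt
    have hface : insert i F ∈ SubwordComplex cs Q π := ⟨w, hwred, hwprod, hsub'⟩
    have := hmax _ hface (Finset.subset_insert i F)
    exact hiF (this ▸ Finset.mem_insert_self i F)
  have hlenπ : cs.length π = w.length := by rw [← hwprod]; exact hwred
  have hcard : (complementWord Q F).length = Q.length - F.card := complementWord_length Q F
  have hFle : F.card ≤ Q.length := by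
    have := Finset.card_le_univ F
    rwa [Fintype.card_fin] at this
  omega

lemma isPure_subwordComplex (cs : CoxeterSystem M W) (Q : List B) (π : W) :
    IsPure (SubwordComplex cs Q π) := by
  intro F G hF hG
  rw [facet_card_eq cs Q π hF, facet_card_eq cs Q π hG]

/-- Vertex decomposability transfers along images of finset embeddings. -/
lemma vertexDecomposable_map {V V' : Type*} (e : V ↪ V') {Δ : Set (Finset V)}
    (h : VertexDecomposable Δ) : VertexDecomposable ((Finset.map e) '' Δ) := by
  induction h with
  | of_empty_face =>
      have : (Finset.map e) '' {(∅ : Finset V)} = {(∅ : Finset V')} := by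
        rw [Set.image_singleton, Finset.map_empty]
      rw [this]
      exact VertexDecomposable.of_empty_face
  | step Δ v hpure hdel hlink ihdel ihlink =>
      apply VertexDecomposable.step _ (e v)
      · -- purity
        intro F' G' hF' hG'
        have key : ∀ H' : Finset V', IsFacet ((Finset.map e) '' Δ) H' →
            ∃ H : Finset V, IsFacet Δ H ∧ H' = H.map e := by
          rintro H' ⟨⟨H, hH, rfl⟩, hmax⟩
          refine ⟨H, ⟨hH, ?_⟩, rfl⟩
          intro G hG hsub
          have := hmax (G.map e) ⟨G, hG, rfl⟩ (Finset.map_subset_map.2 hsub)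
          exact Finset.map_injective e this
        obtain ⟨F, hF, rfl⟩ := key F' hF'
        obtain ⟨G, hG, rfl⟩ := key G' hG'
        rw [Finset.card_map, Finset.card_map]
        exact hpure F G hF hG
      · -- deletion
        have hdeleq : complexDel ((Finset.map e) '' Δ) (e v)
            = (Finset.map e) '' (complexDel Δ v) := by
          ext G'
          constructor
          · rintro ⟨⟨G, hG, rfl⟩, hv⟩
            exact ⟨G, ⟨hG, fun hvG => hv (Finset.mem_map_of_mem e hvG)⟩, rfl⟩
          · rintro ⟨G, ⟨hG, hv⟩, rfl⟩
            exact ⟨⟨G, hG, rfl⟩, fun hvG => hv ((Finset.mem_map' e).1 hvG)⟩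
        rw [hdeleq]
        exact ihdel
      · -- link
        have hlinkeq : complexLink ((Finset.map e) '' Δ) (e v)
            = (Finset.map e) '' (complexLink Δ v) := by
          ext G'
          constructor
          · rintro ⟨hv, ⟨G, hG, rfl⟩, hins⟩
            obtain ⟨H, hH, hHins⟩ := hins
            have hveq : insert (e v) (Finset.map e G) = (insert v G).map e :=
              (Finset.map_insert e v G).symm
            rw [hveq] at hHins
            have hHeq : H = insert v G := Finset.map_injective e hHins
            subst hHeq
            exact ⟨G, ⟨fun hvG => hv ((Finset.mem_map' e).2 hvG), hG, hH⟩, rfl⟩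
          · rintro ⟨G, ⟨hv, hG, hins⟩, rfl⟩
            refine ⟨fun hvG => hv ((Finset.mem_map' e).1 hvG), ⟨G, hG, rfl⟩, ?_⟩
            rw [← Finset.map_insert e v G]
            exact ⟨insert v G, hins, rfl⟩
        rw [hlinkeq]
        exact ihlink

end CoxAux


namespace CoxAux

variable {B W : Type*} [Group W] {M : CoxeterMatrix B}

lemma zero_not_mem_map_succ {n : ℕ} (P' : Finset (Fin n)) :
    (0 : Fin (n + 1)) ∉ Finset.map (Fin.succEmb n) P' := by
  intro h
  obtain ⟨x, _, hx⟩ := Finset.mem_map.1 h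
  exact Fin.succ_ne_zero x hx

lemma exists_map_of_zero_not_mem {n : ℕ} (P : Finset (Fin (n + 1)))
    (h : (0 : Fin (n + 1)) ∉ P) : ∃ P' : Finset (Fin n), P = Finset.map (Fin.succEmb n) P' := by
  refine ⟨Finset.univ.filter (fun j => j.succ ∈ P), ?_⟩
  ext x
  rw [Finset.mem_map]
  constructor
  · intro hx
    have hx0 : x ≠ 0 := fun h0 => h (h0 ▸ hx)
    obtain ⟨j, rfl⟩ := Fin.eq_succ_of_ne_zero hx0
    exact ⟨j, Finset.mem_filter.2 ⟨Finset.mem_univ j, hx⟩, rfl⟩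
  · rintro ⟨j, hj, rfl⟩
    exact (Finset.mem_filter.1 hj).2

lemma complementWord_cons_map (a : B) (Q' : List B) (P' : Finset (Fin Q'.length)) :
    complementWord (a :: Q') (Finset.map (Fin.succEmb Q'.length) P')
      = a :: complementWord Q' P' := by
  rw [complementWord]
  have hfr : List.finRange ((a :: Q').length)
      = (0 : Fin (Q'.length + 1)) :: (List.finRange Q'.length).map Fin.succ :=
    List.finRange_succ
  rw [hfr, List.filter_cons, if_pos (by simpa using zero_not_mem_map_succ P'), List.filter_map]
  have hcongr : List.filter
        ((fun i : Fin ((a :: Q').length) =>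
            decide (i ∉ Finset.map (Fin.succEmb Q'.length) P'))
          ∘ (Fin.succ : Fin Q'.length → Fin ((a :: Q').length))) (List.finRange Q'.length)
      = List.filter (fun i => decide (i ∉ P')) (List.finRange Q'.length) := by
    apply List.filter_congr
    intro x _
    simp only [Function.comp]
    have h1 : x.succ ∈ Finset.map (Fin.succEmb Q'.length) P' ↔ x ∈ P' := Finset.mem_map' _
    by_cases hx : x ∈ P' <;> simp [hx, h1]
  rw [hcongr, List.map_cons, List.map_map, complementWord]
  have h0 : (a :: Q').get (0 : Fin (Q'.length + 1)) = a := rfl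
  rw [h0]
  congr 1

lemma complementWord_cons_insert (a : B) (Q' : List B) (P' : Finset (Fin Q'.length)) :
    complementWord (a :: Q') (insert (0 : Fin (Q'.length + 1))
        (Finset.map (Fin.succEmb Q'.length) P'))
      = complementWord Q' P' := by
  rw [complementWord]
  have hfr : List.finRange ((a :: Q').length)
      = (0 : Fin (Q'.length + 1)) :: (List.finRange Q'.length).map Fin.succ :=
    List.finRange_succ
  rw [hfr, List.filter_cons, if_neg (by simp), List.filter_map]
  have hcongr : List.filter
        ((fun i : Fin ((a :: Q').length) =>
            decide (i ∉ insert (0 : Fin (Q'.length + 1))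
              (Finset.map (Fin.succEmb Q'.length) P')))
          ∘ (Fin.succ : Fin Q'.length → Fin ((a :: Q').length))) (List.finRange Q'.length)
      = List.filter (fun i => decide (i ∉ P')) (List.finRange Q'.length) := by
    apply List.filter_congr
    intro x _
    simp only [Function.comp, Finset.mem_insert]
    have h1 : x.succ ∈ Finset.map (Fin.succEmb Q'.length) P' ↔ x ∈ P' := Finset.mem_map' _
    have h2 : x.succ ≠ (0 : Fin (Q'.length + 1)) := Fin.succ_ne_zero x
    by_cases hx : x ∈ P' <;> simp [hx, h1, h2]
  rw [hcongr, List.map_map, complementWord]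
  congr 1

lemma cons_reduced_facts (cs : CoxeterSystem M W) {a : B} {r : List B} {π : W}
    (hred : cs.IsReduced (a :: r)) (hprod : cs.wordProd (a :: r) = π) :
    cs.IsReduced r ∧ cs.wordProd r = cs.simple a * π
      ∧ cs.length (cs.simple a * π) < cs.length π := by
  have hp : cs.wordProd r = cs.simple a * π := by
    rw [← hprod, cs.wordProd_cons, cs.simple_mul_simple_cancel_left]
  have hlπ : cs.length π = r.length + 1 := by
    rw [← hprod]
    have := hred
    unfold CoxeterSystem.IsReduced at this
    rw [this, List.length_cons]
  have hle : cs.length (cs.simple a * π) ≤ r.length := by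
    rw [← hp]
    exact cs.length_wordProd_le r
  have hdich := cs.length_simple_mul π a
  have heq : cs.length (cs.simple a * π) + 1 = cs.length π := hdich.resolve_left (by omega)
  refine ⟨?_, hp, by omega⟩
  unfold CoxeterSystem.IsReduced
  rw [hp]
  omega

lemma cons_reduced_of (cs : CoxeterSystem M W) {a : B} {π : W}
    (hlt : cs.length (cs.simple a * π) < cs.length π) {u : List B}
    (hured : cs.IsReduced u) (huprod : cs.wordProd u = cs.simple a * π) :
    cs.IsReduced (a :: u) ∧ cs.wordProd (a :: u) = π := by
  have hp : cs.wordProd (a :: u) = π := by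
    rw [cs.wordProd_cons, huprod, cs.simple_mul_simple_cancel_left]
  have heq : cs.length (cs.simple a * π) + 1 = cs.length π :=
    (cs.length_simple_mul π a).resolve_left (by omega)
  have hu : cs.length (cs.wordProd u) = u.length := hured
  refine ⟨?_, hp⟩
  unfold CoxeterSystem.IsReduced
  rw [hp, List.length_cons]
  rw [huprod] at hu
  omega

end CoxAux

theorem subwordComplex_vertexDecomposable (cs : CoxeterSystem M W) (Q : List B) (π : W)
    (hQ : ∃ w : List B, cs.IsReduced w ∧ cs.wordProd w = π ∧ w.Sublist Q) :
    VertexDecomposable (SubwordComplex cs Q π) := by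
  induction Q generalizing π with
  | nil =>
      have hempty : SubwordComplex cs [] π = {(∅ : Finset (Fin ([] : List B).length))} := by
        obtain ⟨w, hwred, hwprod, hwsub⟩ := hQ
        have hw : w = [] := List.sublist_nil.mp hwsub
        subst hw
        ext P
        simp only [Set.mem_singleton_iff]
        constructor
        · intro _
          apply Finset.eq_empty_of_forall_notMem
          intro x _
          exact absurd x.isLt (by simp)
        · rintro rfl
          exact ⟨[], hwred, hwprod, List.nil_sublist _⟩
      rw [hempty]
      exact VertexDecomposable.of_empty_face
  | cons a Q' ih =>
      by_cases hcase : ∃ w : List B, cs.IsReduced w ∧ cs.wordProd w = π ∧ w.Sublist Q'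
      · -- the first letter of `Q` is not essential
        apply VertexDecomposable.step _ ((0 : Fin (Q'.length + 1)))
        · exact CoxAux.isPure_subwordComplex cs (a :: Q') π
        · -- deletion
          by_cases hlen : cs.length (cs.simple a * π) < cs.length π
          · have hdel : complexDel (SubwordComplex cs (a :: Q') π) (0 : Fin (Q'.length + 1))
                = (Finset.map (Fin.succEmb Q'.length)) ''
                    (SubwordComplex cs Q' (cs.simple a * π)) := by
              ext P
              constructor
              · rintro ⟨⟨w, hwred, hwprod, hwsub⟩, hvP⟩
                obtain ⟨P', rfl⟩ := CoxAux.exists_map_of_zero_not_mem P hvP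
                rw [CoxAux.complementWord_cons_map] at hwsub
                rcases List.sublist_cons_iff.1 hwsub with h | ⟨r, rfl, hr⟩
                · obtain ⟨u, hured, huprod, husub⟩ :=
                    CoxAux.left_exchange_sublist cs hwred (by rw [hwprod]; exact hlen)
                  exact ⟨P', ⟨u, hured, by rw [huprod, hwprod], husub.trans h⟩, rfl⟩
                · obtain ⟨hr1, hr2, _⟩ := CoxAux.cons_reduced_facts cs hwred hwprod
                  exact ⟨P', ⟨r, hr1, hr2, hr⟩, rfl⟩
              · rintro ⟨P', ⟨u, hured, huprod, husub⟩, rfl⟩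
                obtain ⟨h1, h2⟩ := CoxAux.cons_reduced_of cs hlen hured huprod
                refine ⟨⟨a :: u, h1, h2, ?_⟩, CoxAux.zero_not_mem_map_succ P'⟩
                rw [CoxAux.complementWord_cons_map]
                exact List.cons_sublist_cons.2 husub
            rw [hdel]
            refine CoxAux.vertexDecomposable_map _ (ih (cs.simple a * π) ?_)
            obtain ⟨w, hwred, hwprod, hwsub⟩ := hcase
            obtain ⟨u, hured, huprod, husub⟩ :=
              CoxAux.left_exchange_sublist cs hwred (by rw [hwprod]; exact hlen)
            exact ⟨u, hured, by rw [huprod, hwprod], husub.trans hwsub⟩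
          · have hdel : complexDel (SubwordComplex cs (a :: Q') π) (0 : Fin (Q'.length + 1))
                = (Finset.map (Fin.succEmb Q'.length)) '' (SubwordComplex cs Q' π) := by
              ext P
              constructor
              · rintro ⟨⟨w, hwred, hwprod, hwsub⟩, hvP⟩
                obtain ⟨P', rfl⟩ := CoxAux.exists_map_of_zero_not_mem P hvP
                rw [CoxAux.complementWord_cons_map] at hwsub
                rcases List.sublist_cons_iff.1 hwsub with h | ⟨r, rfl, hr⟩
                · exact ⟨P', ⟨w, hwred, hwprod, h⟩, rfl⟩
                · obtain ⟨_, _, hlt⟩ := CoxAux.cons_reduced_facts cs hwred hwprod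
                  exact absurd hlt hlen
              · rintro ⟨P', ⟨u, hured, huprod, husub⟩, rfl⟩
                refine ⟨⟨u, hured, huprod, ?_⟩, CoxAux.zero_not_mem_map_succ P'⟩
                rw [CoxAux.complementWord_cons_map]
                exact husub.cons a
            rw [hdel]
            exact CoxAux.vertexDecomposable_map _ (ih π hcase)
        · -- link
          have hlink : complexLink (SubwordComplex cs (a :: Q') π) (0 : Fin (Q'.length + 1))
              = (Finset.map (Fin.succEmb Q'.length)) '' (SubwordComplex cs Q' π) := by
            ext P
            constructor
            · rintro ⟨hv, _, hins⟩
              obtain ⟨P', rfl⟩ := CoxAux.exists_map_of_zero_not_mem P hv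
              have hins2 : insert (0 : Fin (Q'.length + 1))
                  (Finset.map (Fin.succEmb Q'.length) P') ∈ SubwordComplex cs (a :: Q') π := by
                convert hins using 2
                congr 1
                rfl
                congr!
              obtain ⟨w, hwred, hwprod, hwsub⟩ := hins2
              rw [CoxAux.complementWord_cons_insert] at hwsub
              exact ⟨P', ⟨w, hwred, hwprod, hwsub⟩, rfl⟩
            · rintro ⟨P', ⟨u, hured, huprod, husub⟩, rfl⟩
              have hins2 : insert (0 : Fin (Q'.length + 1))
                  (Finset.map (Fin.succEmb Q'.length) P') ∈ SubwordComplex cs (a :: Q') π := by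
                refine ⟨u, hured, huprod, ?_⟩
                rw [CoxAux.complementWord_cons_insert]
                exact husub
              refine ⟨CoxAux.zero_not_mem_map_succ P', ⟨u, hured, huprod, ?_⟩, ?_⟩
              · rw [CoxAux.complementWord_cons_map]
                exact husub.cons a
              · convert hins2 using 2
                congr 1
                rfl
                congr!
          rw [hlink]
          exact CoxAux.vertexDecomposable_map _ (ih π hcase)
      · -- the first letter of `Q` is essential: `Δ(Q, π) ≅ Δ(Q', s a * π)`
        obtain ⟨w, hwred, hwprod, hwsub⟩ := hQ
        rcases List.sublist_cons_iff.1 hwsub with h | ⟨r, rfl, hr⟩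
        · exact absurd ⟨w, hwred, hwprod, h⟩ hcase
        obtain ⟨hrred, hrprod, hlt⟩ := CoxAux.cons_reduced_facts cs hwred hwprod
        have heq : SubwordComplex cs (a :: Q') π
            = (Finset.map (Fin.succEmb Q'.length)) ''
                (SubwordComplex cs Q' (cs.simple a * π)) := by
          ext P
          constructor
          · rintro ⟨u, hured, huprod, husub⟩
            have h0 : (0 : Fin (Q'.length + 1)) ∉ P := by
              intro h0mem
              have hsub1 : (complementWord (a :: Q') P).Sublist
                  (complementWord (a :: Q') {(0 : Fin (Q'.length + 1))}) :=
                CoxAux.complementWord_anti _ (Finset.singleton_subset_iff.2 h0mem)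
              have hsing : ({(0 : Fin (Q'.length + 1))} : Finset (Fin (Q'.length + 1)))
                  = insert (0 : Fin (Q'.length + 1))
                      (Finset.map (Fin.succEmb Q'.length) (∅ : Finset (Fin Q'.length))) := by
                simp
              rw [hsing, CoxAux.complementWord_cons_insert] at hsub1
              have hsub2 : (complementWord Q' (∅ : Finset (Fin Q'.length))).Sublist Q' :=
                CoxAux.complementWord_sublist Q' ∅
              exact hcase ⟨u, hured, huprod, (husub.trans hsub1).trans hsub2⟩
            obtain ⟨P', rfl⟩ := CoxAux.exists_map_of_zero_not_mem P h0
            rw [CoxAux.complementWord_cons_map] at husub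
            rcases List.sublist_cons_iff.1 husub with h | ⟨r', rfl, hr'⟩
            · exact absurd ⟨u, hured, huprod,
                h.trans (CoxAux.complementWord_sublist Q' P')⟩ hcase
            · obtain ⟨h1, h2, _⟩ := CoxAux.cons_reduced_facts cs hured huprod
              exact ⟨P', ⟨r', h1, h2, hr'⟩, rfl⟩
          · rintro ⟨P', ⟨u, hured, huprod, husub⟩, rfl⟩
            obtain ⟨h1, h2⟩ := CoxAux.cons_reduced_of cs hlt hured huprod
            refine ⟨a :: u, h1, h2, ?_⟩
            rw [CoxAux.complementWord_cons_map]
            exact List.cons_sublist_cons.2 husub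
        rw [heq]
        exact CoxAux.vertexDecomposable_map _ (ih (cs.simple a * π) ⟨r, hrred, hrprod, hr⟩)
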